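/- Let $V$ be an $n$-dimensional Euclidean vector space, $\Lambda \subseteq V$ a full-rank lattice with Voronoi cell $\mathcal{V}_0$ around the origin, and $X \subseteq V$ a convex measurable set with $\mathcal{V}_0 \subseteq cX$ for some $c > 0$. Then for all $t, t' \in V$ and all $q > 2c$: $e^{-2nc/q} \cdot \frac{q^n \mathrm{vol}(X)}{\det(\Lambda)} \le |(\Lambda + t) \cap q(X + t')| \le e^{2nc/q} \cdot \frac{q^n \mathrm{vol}(X)}{\det(\Lambda)}$. -/

import Mathlib

open MeasureTheory Pointwise ENNReal

def voronoiCell {V : Type*} [NormedAddCommGroup V] (Λ : Set V) : Set V :=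
  {x : V | ∀ ℓ ∈ Λ, ‖x‖ ≤ ‖x - ℓ‖}

section helpers

variable {V : Type*} [NormedAddCommGroup V] [InnerProductSpace ℝ V]
    [FiniteDimensional ℝ V] [MeasurableSpace V] [BorelSpace V]
    (μ : Measure V) [μ.IsAddHaarMeasure]
    (Λ : Submodule ℤ V) [DiscreteTopology Λ] [IsZLattice ℝ Λ]

lemma vor_closed : IsClosed (voronoiCell (Λ : Set V)) := by
  have h : voronoiCell (Λ : Set V) = ⋂ ℓ ∈ (Λ : Set V), {x : V | ‖x‖ ≤ ‖x - ℓ‖} := by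
    ext x; simp [voronoiCell]
  rw [h]
  exact isClosed_biInter fun ℓ _ =>
    isClosed_le continuous_norm (continuous_id.sub continuous_const).norm

lemma vor_neg {x : V} (hx : x ∈ voronoiCell (Λ : Set V)) : -x ∈ voronoiCell (Λ : Set V) := by
  intro ℓ hℓ
  have h := hx (-ℓ) (neg_mem hℓ)
  calc ‖-x‖ = ‖x‖ := norm_neg x
    _ ≤ ‖x - -ℓ‖ := h
    _ = ‖-x - ℓ‖ := by rw [← norm_neg (x - -ℓ)]; congr 1; abel

lemma lat_closed : IsClosed ((Λ : Set V)) := by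
  have : DiscreteTopology Λ.toAddSubgroup := ‹DiscreteTopology Λ›
  exact AddSubgroup.isClosed_of_discrete (H := Λ.toAddSubgroup)

lemma lat_inter_finite {B : Set V} (hB : Bornology.IsBounded B) :
    (B ∩ (Λ : Set V)).Finite := by
  have : DiscreteTopology ((Λ : Set V) : Type _) := ‹DiscreteTopology Λ›
  exact Metric.finite_isBounded_inter_isClosed DiscreteTopology.isDiscrete hB (lat_closed Λ)

lemma vor_covers (x : V) : ∃ ℓ ∈ (Λ : Set V), x - ℓ ∈ voronoiCell (Λ : Set V) := by
  have hC : (Metric.closedBall x ‖x‖ ∩ (Λ : Set V)).Finite :=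
    lat_inter_finite Λ Metric.isBounded_closedBall
  have h0 : (0 : V) ∈ Metric.closedBall x ‖x‖ ∩ (Λ : Set V) := by
    refine ⟨?_, Submodule.zero_mem Λ⟩
    simp [Metric.mem_closedBall, dist_eq_norm]
  obtain ⟨ℓ, hℓ, hmin⟩ := Set.exists_min_image _ (fun ℓ => ‖x - ℓ‖) hC ⟨0, h0⟩
  refine ⟨ℓ, hℓ.2, ?_⟩
  intro ℓ' hℓ'
  by_contra hcon
  push_neg at hcon
  have hx0 : ‖x - ℓ‖ ≤ ‖x‖ := by simpa using hmin 0 h0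
  have hmem : ℓ + ℓ' ∈ Metric.closedBall x ‖x‖ ∩ (Λ : Set V) := by
    refine ⟨?_, Submodule.add_mem Λ hℓ.2 hℓ'⟩
    have heq : ‖x - (ℓ + ℓ')‖ = ‖x - ℓ - ℓ'‖ := by congr 1; abel
    have : ‖x - (ℓ + ℓ')‖ < ‖x‖ := by rw [heq]; exact lt_of_lt_of_le hcon hx0
    rw [Metric.mem_closedBall, dist_eq_norm, norm_sub_rev]
    exact this.le
  have := hmin _ hmem
  have h2 : ‖x - (ℓ + ℓ')‖ < ‖x - ℓ‖ := by
    have heq : ‖x - (ℓ + ℓ')‖ = ‖x - ℓ - ℓ'‖ := by congr 1; abel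
    rw [heq]; exact hcon
  exact absurd this (not_le.2 h2)

lemma bisector_null (g : V) (hg : g ≠ 0) : μ {x : V | ‖x‖ = ‖x - g‖} = 0 := by
  set f : V →L[ℝ] ℝ := innerSL ℝ g with hf
  have hker : LinearMap.ker (f : V →ₗ[ℝ] ℝ) ≠ ⊤ := by
    intro h
    have : f g = 0 := by
      have : g ∈ LinearMap.ker (f : V →ₗ[ℝ] ℝ) := by rw [h]; trivial
      simpa using this
    rw [hf] at this
    simp only [innerSL_apply_apply, real_inner_self_eq_norm_sq] at this
    exact hg (by simpa [pow_eq_zero_iff] using (pow_eq_zero_iff (n := 2) two_ne_zero).1 this)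
  set s : AffineSubspace ℝ V := AffineSubspace.mk' (((1:ℝ)/2) • g) (LinearMap.ker (f : V →ₗ[ℝ] ℝ)) with hs
  have hstop : s ≠ ⊤ := by
    intro h
    apply hker
    have := congrArg AffineSubspace.direction h
    rwa [AffineSubspace.direction_mk', AffineSubspace.direction_top] at this
  have hsub : {x : V | ‖x‖ = ‖x - g‖} ⊆ (s : Set V) := by
    intro x hx
    have hx' : ‖x‖ = ‖x - g‖ := hx
    have hsq : ‖x‖ ^ 2 = ‖x - g‖ ^ 2 := by rw [hx']
    rw [norm_sub_sq_real] at hsq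
    have hinner : inner ℝ x g = ‖g‖ ^ 2 / 2 := by linarith [hsq]
    rw [hs]
    rw [AffineSubspace.mem_coe, AffineSubspace.mem_mk']
    rw [vsub_eq_sub, LinearMap.mem_ker]
    simp only [hf, ContinuousLinearMap.coe_coe, innerSL_apply_apply, inner_sub_right, real_inner_smul_right]
    rw [real_inner_self_eq_norm_sq, real_inner_comm]
    rw [hinner]; ring
  exact measure_mono_null hsub (Measure.addHaar_affineSubspace μ s hstop)

lemma vor_fd : IsAddFundamentalDomain ↥Λ (voronoiCell (Λ : Set V)) μ := by
  apply IsAddFundamentalDomain.mk''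
  · exact (vor_closed Λ).measurableSet.nullMeasurableSet
  · refine Filter.Eventually.of_forall fun x => ?_
    obtain ⟨ℓ, hℓ, h⟩ := vor_covers Λ x
    refine ⟨⟨-ℓ, Submodule.neg_mem Λ hℓ⟩, ?_⟩
    show -ℓ + x ∈ _
    rwa [neg_add_eq_sub]
  · intro g hg
    have hgV : (g : V) ≠ 0 := fun h => hg (Subtype.ext h)
    refine measure_mono_null ?_ (bisector_null μ (g : V) hgV)
    rintro x ⟨hx1, hx2⟩
    obtain ⟨y, hy, rfl⟩ := hx1
    have h1 : ‖(g : V) + y‖ ≤ ‖(g : V) + y - g‖ := hx2 g g.2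
    have h2 : ‖y‖ ≤ ‖y - -(g : V)‖ := hy (-(g : V)) (Submodule.neg_mem Λ g.2)
    have h3 : ‖(g : V) + y - g‖ = ‖y‖ := by congr 1; abel
    have h4 : ‖y - -(g : V)‖ = ‖(g : V) + y‖ := by congr 1; abel
    have : ‖(g : V) + y‖ = ‖(g : V) + y - g‖ := le_antisymm h1 (by rw [h3]; rw [h4] at h2; exact h2)
    exact this
  · intro g
    exact (measurePreserving_add_left μ (g : V)).quasiMeasurePreserving

end helpers

theorem stmt9 {V : Type*} [NormedAddCommGroup V] [InnerProductSpace ℝ V]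
    [FiniteDimensional ℝ V] [MeasurableSpace V] [BorelSpace V]
    (μ : Measure V) [μ.IsAddHaarMeasure]
    (n : ℕ) (hn : Module.finrank ℝ V = n)
    (Λ : Submodule ℤ V) [DiscreteTopology Λ] [IsZLattice ℝ Λ]
    (X : Set V) (hXc : Convex ℝ X) (hXm : MeasurableSet X)
    (hXb : Bornology.IsBounded X)
    (c : ℝ) (hc : 0 < c) (hV : voronoiCell (Λ : Set V) ⊆ c • X)
    (t t' : V) (q : ℝ) (hq : 2 * c < q) :
    Real.exp (-(2 * n * c / q)) * (q ^ n * (μ X).toReal / ZLattice.covolume Λ μ)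
        ≤ (((Λ : Set V) + {t}) ∩ (q • (X + {t'}))).ncard ∧
      ((((Λ : Set V) + {t}) ∩ (q • (X + {t'}))).ncard : ℝ)
        ≤ Real.exp (2 * n * c / q) * (q ^ n * (μ X).toReal / ZLattice.covolume Λ μ) := by
  have hq0 : 0 < q := lt_trans (by linarith) hq
  have hqc : 0 < q - c := by linarith
  have hqc' : 0 < q + c := by linarith
  set F := voronoiCell (Λ : Set V) with hF
  have hFfd : IsAddFundamentalDomain ↥Λ F μ := vor_fd μ Λ
  have hFm : MeasurableSet F := (vor_closed Λ).measurableSet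
  set S := ((Λ : Set V) + {t}) ∩ (q • (X + {t'})) with hSdef
  have hBb : Bornology.IsBounded (q • (X + {t'})) :=
    (hXb.add Bornology.isBounded_singleton).smul₀ q
  have hSfin : S.Finite := by
    have h1 : Bornology.IsBounded ((q • (X + {t'})) + {-t}) :=
      hBb.add Bornology.isBounded_singleton
    have h2 := lat_inter_finite Λ h1
    refine (h2.image (fun v => v + t)).subset ?_
    rintro x ⟨hx1, hx2⟩
    rw [Set.add_singleton] at hx1
    obtain ⟨α, hα, rfl⟩ := hx1
    refine ⟨α, ⟨?_, hα⟩, rfl⟩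
    rw [Set.add_singleton]
    exact ⟨α + t, hx2, by simp⟩
  set T := hSfin.toFinset with hT
  have hvadd_eq : ∀ (a : V) (s : Set V), a +ᵥ s = (fun x => -a + x) ⁻¹' s := by
    intro a s
    ext x
    constructor
    · rintro ⟨y, hy, rfl⟩
      simpa [vadd_eq_add] using hy
    · intro hx
      exact ⟨-a + x, hx, by simp [vadd_eq_add]⟩
  have hvaddμ : ∀ (a : V) (s : Set V), μ (a +ᵥ s) = μ s := by
    intro a s
    rw [hvadd_eq, measure_preimage_add]
  have hvaddm : ∀ (a : V), MeasurableSet (a +ᵥ F) := by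
    intro a
    rw [hvadd_eq]
    exact hFm.preimage (measurable_const_add _)
  have hmemadd : ∀ {z : V}, z ∈ (Λ : Set V) + {t} → ∃ α ∈ (Λ : Set V), z = α + t := by
    intro z hz
    rw [Set.add_singleton] at hz
    obtain ⟨α, hα, rfl⟩ := hz
    exact ⟨α, hα, rfl⟩
  have hdisj : (↑T : Set V).Pairwise (Function.onFun (AEDisjoint μ) fun ℓ => ℓ +ᵥ F) := by
    intro a ha b hb hab
    rw [Finset.mem_coe, hT, Set.Finite.mem_toFinset] at ha hb
    obtain ⟨α, hα, rfl⟩ := hmemadd ha.1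
    obtain ⟨β, hβ, rfl⟩ := hmemadd hb.1
    show μ (((α + t) +ᵥ F) ∩ ((β + t) +ᵥ F)) = 0
    have hstep : (β + t) +ᵥ F = (α + t) +ᵥ (((β + t) - (α + t)) +ᵥ F) := by
      rw [vadd_vadd]
      congr 1
      abel
    rw [hstep, ← Set.vadd_set_inter, hvaddμ]
    have hgmem : (β + t) - (α + t) ∈ Λ := by
      have : (β + t) - (α + t) = β - α := by abel
      rw [this]
      exact Submodule.sub_mem Λ hβ hα
    have hgne : (⟨(β + t) - (α + t), hgmem⟩ : ↥Λ) ≠ 0 := by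
      intro h
      apply hab
      have := congrArg (Subtype.val) h
      simp only [Submodule.coe_zero] at this
      have h2 : (β + t) - (α + t) = 0 := this
      exact (sub_eq_zero.mp h2).symm
    have hkey := hFfd.aedisjoint (show (0 : ↥Λ) ≠ ⟨(β + t) - (α + t), hgmem⟩ from fun h => hgne h.symm)
    have hz : ((0 : ↥Λ) +ᵥ F : Set V) = F := zero_vadd _ _
    have hcoe : ((⟨(β + t) - (α + t), hgmem⟩ : ↥Λ) +ᵥ F : Set V) = ((β + t) - (α + t)) +ᵥ F := rfl
    have := hkey
    rw [Function.onFun, hz, hcoe] at this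
    exact this
  have hcount : μ (⋃ ℓ ∈ T, ℓ +ᵥ F) = (T.card : ℝ≥0∞) * μ F := by
    rw [measure_biUnion_finset₀ hdisj (fun b _ => (hvaddm b).nullMeasurableSet)]
    simp only [hvaddμ, Finset.sum_const, nsmul_eq_mul]
  have hAddSing : ∀ (A : Set V) (v : V), A + {v} = v +ᵥ A := by
    intro A v
    rw [Set.add_singleton, hvadd_eq]
    ext x
    simp only [Set.mem_image, Set.mem_preimage]
    constructor
    · rintro ⟨a, ha, rfl⟩
      simpa [add_comm] using ha
    · intro hx
      exact ⟨-v + x, hx, by abel⟩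
  have hXsmul : ∀ r : ℝ, 0 ≤ r → μ (r • X + {q • t'}) = ENNReal.ofReal (r ^ n) * μ X := by
    intro r hr
    rw [hAddSing, hvaddμ, Measure.addHaar_smul, hn, abs_of_nonneg (pow_nonneg hr n)]
  have hUsub : (⋃ ℓ ∈ T, ℓ +ᵥ F) ⊆ (q + c) • X + {q • t'} := by
    intro x hx
    simp only [Set.mem_iUnion] at hx
    obtain ⟨ℓ, hℓT, hx⟩ := hx
    have hℓS : ℓ ∈ S := by rwa [hT, Set.Finite.mem_toFinset] at hℓT
    obtain ⟨f, hfF, rfl⟩ := hx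
    have hℓB : ℓ ∈ q • X + {q • t'} := by
      have h := hℓS.2
      rwa [smul_add, Set.smul_set_singleton] at h
    rw [Set.add_singleton] at hℓB
    obtain ⟨u, hu, rfl⟩ := hℓB
    have hf : f ∈ c • X := hV hfF
    rw [Set.add_singleton]
    refine ⟨u + f, ?_, ?_⟩
    · rw [hXc.add_smul hq0.le hc.le]
      exact Set.add_mem_add hu hf
    · show u + f + q • t' = (u + q • t') +ᵥ f
      rw [vadd_eq_add]
      abel
  have hLsub : (q - c) • X + {q • t'} ⊆ ⋃ ℓ ∈ T, ℓ +ᵥ F := by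
    intro y hy
    rw [Set.add_singleton] at hy
    obtain ⟨u, hu, rfl⟩ := hy
    obtain ⟨lam, hlam, hfF⟩ := vor_covers Λ (u + q • t' - t)
    have hyℓ : u + q • t' - (lam + t) ∈ F := by
      have heq : u + q • t' - (lam + t) = u + q • t' - t - lam := by abel
      rw [heq]
      exact hfF
    have hnegf : -(u + q • t' - (lam + t)) ∈ c • X := hV (vor_neg Λ hyℓ)
    have hℓq : lam + t ∈ q • (X + {t'}) := by
      rw [smul_add, Set.smul_set_singleton, Set.add_singleton]
      refine ⟨u + -(u + q • t' - (lam + t)), ?_, by abel⟩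
      have hsplit : q • X = (q - c) • X + c • X := by
        rw [← hXc.add_smul hqc.le hc.le]
        norm_num
      rw [hsplit]
      exact Set.add_mem_add hu hnegf
    have hℓS : lam + t ∈ S := by
      refine ⟨?_, hℓq⟩
      rw [Set.add_singleton]
      exact ⟨lam, hlam, rfl⟩
    refine Set.mem_iUnion.mpr ⟨lam + t, Set.mem_iUnion.mpr ⟨?_, ?_⟩⟩
    · rw [hT, Set.Finite.mem_toFinset]
      exact hℓS
    · refine ⟨u + q • t' - (lam + t), hyℓ, ?_⟩
      show (lam + t) + (u + q • t' - (lam + t)) = u + q • t'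
      abel
  have hUB : (T.card : ℝ≥0∞) * μ F ≤ ENNReal.ofReal ((q + c) ^ n) * μ X := by
    calc (T.card : ℝ≥0∞) * μ F = μ (⋃ ℓ ∈ T, ℓ +ᵥ F) := hcount.symm
      _ ≤ μ ((q + c) • X + {q • t'}) := measure_mono hUsub
      _ = ENNReal.ofReal ((q + c) ^ n) * μ X := hXsmul _ hqc'.le
  have hLB : ENNReal.ofReal ((q - c) ^ n) * μ X ≤ (T.card : ℝ≥0∞) * μ F := by
    calc ENNReal.ofReal ((q - c) ^ n) * μ X = μ ((q - c) • X + {q • t'}) :=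
          (hXsmul _ hqc.le).symm
      _ ≤ μ (⋃ ℓ ∈ T, ℓ +ᵥ F) := measure_mono hLsub
      _ = (T.card : ℝ≥0∞) * μ F := hcount
  have hμX_fin : μ X ≠ ⊤ := hXb.measure_lt_top.ne
  have hμF_fin : μ F ≠ ⊤ := (((hXb.smul₀ c)).subset hV).measure_lt_top.ne
  have hcov : ZLattice.covolume Λ μ = (μ F).toReal :=
    ZLattice.covolume_eq_measure_fundamentalDomain Λ μ hFfd
  have hcovpos : 0 < ZLattice.covolume Λ μ := ZLattice.covolume_pos Λ μ
  have hcovR : 0 < (μ F).toReal := hcov ▸ hcovpos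
  have hm0 : (0:ℝ) ≤ (μ X).toReal := ENNReal.toReal_nonneg
  have hNT : S.ncard = T.card := Set.ncard_eq_toFinset_card S hSfin
  have hUR : (S.ncard : ℝ) * (μ F).toReal ≤ (q + c) ^ n * (μ X).toReal := by
    have h := ENNReal.toReal_mono (ENNReal.mul_ne_top ENNReal.ofReal_ne_top hμX_fin) hUB
    rw [ENNReal.toReal_mul, ENNReal.toReal_mul, ENNReal.toReal_natCast,
      ENNReal.toReal_ofReal (pow_nonneg hqc'.le n)] at h
    rw [hNT]
    exact h
  have hLR : (q - c) ^ n * (μ X).toReal ≤ (S.ncard : ℝ) * (μ F).toReal := by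
    have h := ENNReal.toReal_mono (ENNReal.mul_ne_top (ENNReal.natCast_ne_top _) hμF_fin) hLB
    rw [ENNReal.toReal_mul, ENNReal.toReal_mul, ENNReal.toReal_natCast,
      ENNReal.toReal_ofReal (pow_nonneg hqc.le n)] at h
    rw [hNT]
    exact h
  have hepos : (0:ℝ) < Real.exp (2 * c / q) := Real.exp_pos _
  have he : 1 + 2 * c / q ≤ Real.exp (2 * c / q) := by
    linarith [Real.add_one_le_exp (2 * c / q)]
  have hx1 : q + c ≤ q * Real.exp (2 * c / q) := by
    have h2 : q * (1 + 2 * c / q) = q + 2 * c := by field_simp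
    nlinarith [mul_le_mul_of_nonneg_left he hq0.le]
  have hx2 : q * Real.exp (-(2 * c / q)) ≤ q - c := by
    have hgap : (q - c) * (1 + 2 * c / q) - q = c * (q - 2 * c) / q := by
      field_simp
      ring
    have hkey : q ≤ (q - c) * Real.exp (2 * c / q) := by
      have h1 := mul_le_mul_of_nonneg_left he hqc.le
      have h2 : 0 ≤ c * (q - 2 * c) / q := div_nonneg (mul_nonneg hc.le (by linarith)) hq0.le
      nlinarith
    rw [Real.exp_neg, ← div_eq_mul_inv, div_le_iff₀ hepos]
    nlinarith
  have hup : (q + c) ^ n ≤ Real.exp (2 * n * c / q) * q ^ n := by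
    calc (q + c) ^ n ≤ (q * Real.exp (2 * c / q)) ^ n := pow_le_pow_left₀ hqc'.le hx1 n
      _ = q ^ n * Real.exp (2 * c / q) ^ n := mul_pow _ _ _
      _ = q ^ n * Real.exp (n * (2 * c / q)) := by rw [← Real.exp_nat_mul]
      _ = Real.exp (2 * n * c / q) * q ^ n := by
          rw [show (n:ℝ) * (2 * c / q) = 2 * n * c / q by ring, mul_comm]
  have hdown : Real.exp (-(2 * n * c / q)) * q ^ n ≤ (q - c) ^ n := by
    calc Real.exp (-(2 * n * c / q)) * q ^ n = (q * Real.exp (-(2 * c / q))) ^ n := by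
          rw [mul_pow, ← Real.exp_nat_mul,
            show (n:ℝ) * -(2 * c / q) = -(2 * n * c / q) by ring, mul_comm]
      _ ≤ (q - c) ^ n := pow_le_pow_left₀ (mul_nonneg hq0.le (Real.exp_pos _).le) hx2 n
  rw [hcov]
  constructor
  · have h1 : Real.exp (-(2 * n * c / q)) * (q ^ n * (μ X).toReal) ≤ (q - c) ^ n * (μ X).toReal := by
      rw [← mul_assoc]
      exact mul_le_mul_of_nonneg_right hdown hm0
    rw [show Real.exp (-(2 * ↑n * c / q)) * (q ^ n * (μ X).toReal / (μ F).toReal)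
        = Real.exp (-(2 * ↑n * c / q)) * (q ^ n * (μ X).toReal) / (μ F).toReal by ring,
      div_le_iff₀ hcovR]
    linarith [hLR]
  · have h1 : (q + c) ^ n * (μ X).toReal ≤ Real.exp (2 * n * c / q) * (q ^ n * (μ X).toReal) := by
      rw [← mul_assoc]
      exact mul_le_mul_of_nonneg_right hup hm0
    rw [show Real.exp (2 * ↑n * c / q) * (q ^ n * (μ X).toReal / (μ F).toReal)
        = Real.exp (2 * ↑n * c / q) * (q ^ n * (μ X).toReal) / (μ F).toReal by ring,
      le_div_iff₀ hcovR]
    linarith [hUR]
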